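/- For x, z ≥ 0 and y ∈ [0, π/2], the real part of G(x, yi, z) = log((eˣ + e^{yi+z})/(e^{-x} + e^{yi+z})) equals x − artanh(sinh(x)·sinh(z)/(cos(y) + cosh(x)·cosh(z))). -/

import Mathlib

open Real Complex

/-- The gap function `G` (logarithmic form, principal branch complex logarithm). -/
noncomputable def G (x y z : ℂ) : ℂ :=
  Complex.log ((Complex.exp x + Complex.exp (y + z)) /
    (Complex.exp (-x) + Complex.exp (y + z)))

/-- The real inverse hyperbolic tangent. -/
noncomputable def artanh (x : ℝ) : ℝ := (1/2) * Real.log ((1 + x) / (1 - x))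

theorem re_G_of_imaginary_y (x y z : ℝ) (hx : 0 ≤ x) (hz : 0 ≤ z)
    (hy : y ∈ Set.Icc 0 (π/2)) :
    (G (x : ℂ) ((y : ℂ) * Complex.I) (z : ℂ)).re =
      x - _root_.artanh (Real.sinh x * Real.sinh z /
        (Real.cos y + Real.cosh x * Real.cosh z)) := by
  obtain ⟨hy0, hy1⟩ := hy
  have hcos : 0 ≤ Real.cos y :=
    Real.cos_nonneg_of_mem_Icc ⟨by linarith [Real.pi_pos], hy1⟩
  have hp1 : 0 < Real.cos y + Real.cosh (x - z) :=
    add_pos_of_nonneg_of_pos hcos (Real.cosh_pos _)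
  have hp2 : 0 < Real.cos y + Real.cosh (x + z) :=
    add_pos_of_nonneg_of_pos hcos (Real.cosh_pos _)
  have hD : 0 < Real.cos y + Real.cosh x * Real.cosh z :=
    add_pos_of_nonneg_of_pos hcos (by positivity)
  have hart : _root_.artanh (Real.sinh x * Real.sinh z / (Real.cos y + Real.cosh x * Real.cosh z))
      = (1/2) * Real.log ((Real.cos y + Real.cosh (x+z)) / (Real.cos y + Real.cosh (x-z))) := by
    unfold _root_.artanh
    congr 1
    rw [Real.cosh_add, Real.cosh_sub]
    field_simp
    ring_nf
  have habs : ∀ a : ℝ, ‖Complex.exp (a:ℂ) + Complex.exp ((y:ℂ)*Complex.I + (z:ℂ))‖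
      = Real.sqrt (2 * Real.exp (a + z) * (Real.cos y + Real.cosh (a - z))) := by
    intro a
    rw [Complex.norm_def]
    congr 1
    rw [Complex.exp_add, Complex.exp_mul_I]
    simp [Complex.normSq_apply, ← Complex.ofReal_exp, ← Complex.ofReal_cos, ← Complex.ofReal_sin]
    rw [Real.cosh_eq, Real.exp_neg, Real.exp_sub, Real.exp_add]
    have hs := Real.sin_sq_add_cos_sq y
    field_simp
    linear_combination (rexp z ^ 2) * hs
  unfold G
  rw [show (-(x:ℂ)) = ((-x:ℝ):ℂ) by push_cast; ring]
  rw [Complex.log_re, norm_div, habs x, habs (-x)]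
  have hA : (0:ℝ) < 2 * Real.exp (x + z) * (Real.cos y + Real.cosh (x - z)) := by positivity
  have hB0 : 0 < Real.cos y + Real.cosh (-x - z) := by
    rw [show -x - z = -(x+z) by ring, Real.cosh_neg]; exact hp2
  have hB : (0:ℝ) < 2 * Real.exp (-x + z) * (Real.cos y + Real.cosh (-x - z)) := by positivity
  rw [Real.log_div (Real.sqrt_pos.mpr hA).ne' (Real.sqrt_pos.mpr hB).ne',
    Real.log_sqrt hA.le, Real.log_sqrt hB.le, hart]
  rw [show -x - z = -(x+z) by ring, Real.cosh_neg]
  rw [Real.log_mul (by positivity) hp1.ne', Real.log_mul (by positivity) hp2.ne',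
    Real.log_mul two_ne_zero (Real.exp_ne_zero _), Real.log_mul two_ne_zero (Real.exp_ne_zero _),
    Real.log_exp, Real.log_exp, Real.log_div hp2.ne' hp1.ne']
  ring
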